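/- Let $G$ be a finite directed weighted graph without loops with adjacency matrix $A\in\mathbb{R}^{n\times n}_{\geq 0}$, and let $p_k(A)$ be the matrix of weighted sums of nonbacktracking walks of length $k$ (with $p_0(A)=I$, $p_1(A)=A$). Then for all $k\geq 1$, $p_k(A) = \sum_{\substack{\ell=2h+1\ \mathrm{odd}\\ 1\leq \ell\leq k}} \big(A^{\circ(h+1)}\circ (A^T)^{\circ h}\big)\, p_{k-\ell}(A) \; - \; \sum_{\substack{\ell=2h\ \mathrm{even}\\ 2\leq \ell\leq k}} \dd\big((A^{\circ h})^2\big)\, p_{k-\ell}(A)$. -/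

import Mathlib

open Matrix

open scoped Classical in
/-- `pMat A k` is the matrix whose `(i,j)` entry is the weighted sum over all
nonbacktracking walks of length `k` from node `i` to node `j` (the weight of a walk
being the product of the entries of `A` along its steps; node sequences that do not
follow edges of the graph contribute zero), with `pMat A 0 = I`. -/
noncomputable def pMat {n : ℕ} (A : Matrix (Fin n) (Fin n) ℝ) : ℕ → Matrix (Fin n) (Fin n) ℝ
  | 0 => 1
  | Nat.succ k => Matrix.of fun i j =>
      ∑ v ∈ Finset.univ.filter (fun v : Fin (k + 2) → Fin n =>
          v 0 = i ∧ v (Fin.last (k + 1)) = j ∧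
          ∀ t : Fin k, v t.castSucc.castSucc ≠ v t.succ.succ),
        ∏ t : Fin (k + 1), A (v t.castSucc) (v t.succ)

open scoped Classical

variable {n : ℕ}

noncomputable def wt (A : Matrix (Fin n) (Fin n) ℝ) {k : ℕ} (v : Fin (k+2) → Fin n) : ℝ :=
  ∏ t : Fin (k+1), A (v t.castSucc) (v t.succ)

def NB {k : ℕ} (v : Fin (k+2) → Fin n) : Prop :=
  ∀ t : Fin k, v t.castSucc.castSucc ≠ v t.succ.succ

lemma pMat_zero (A : Matrix (Fin n) (Fin n) ℝ) : pMat A 0 = 1 := by rw [pMat]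

lemma pMat_succ_apply (A : Matrix (Fin n) (Fin n) ℝ) (k : ℕ) (i j : Fin n) :
    pMat A (k+1) i j = ∑ v : Fin (k+2) → Fin n,
      if v 0 = i ∧ v (Fin.last (k+1)) = j ∧ NB v then wt A v else 0 := by
  show (pMat A (Nat.succ k)) i j = _
  rw [pMat, Matrix.of_apply, Finset.sum_filter]
  exact Finset.sum_congr rfl fun v _ => if_congr Iff.rfl rfl rfl

noncomputable def T (A : Matrix (Fin n) (Fin n) ℝ) : ℕ → Fin n → Fin n → Fin n → ℝ
  | 0, _, _, _ => 0
  | (k+1), m, i, j => ∑ v : Fin (k+2) → Fin n,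
      if v 0 = m ∧ v 1 = i ∧ v (Fin.last (k+1)) = j ∧ NB v then wt A v else 0

lemma T_zero (A : Matrix (Fin n) (Fin n) ℝ) (m i j : Fin n) : T A 0 m i j = 0 := rfl

lemma T_succ (A : Matrix (Fin n) (Fin n) ℝ) (k : ℕ) (m i j : Fin n) :
    T A (k+1) m i j = ∑ v : Fin (k+2) → Fin n,
      if v 0 = m ∧ v 1 = i ∧ v (Fin.last (k+1)) = j ∧ NB v then wt A v else 0 := by
  rw [T]

lemma PT (A : Matrix (Fin n) (Fin n) ℝ) (k : ℕ) (m i j : Fin n) :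
    pMat A (k+1) m j - T A (k+1) m i j = ∑ w : Fin (k+2) → Fin n,
      if w 0 = m ∧ w (Fin.last (k+1)) = j ∧ NB w ∧ w 1 ≠ i then wt A w else 0 := by
  rw [pMat_succ_apply, T_succ, ← Finset.sum_sub_distrib]
  apply Finset.sum_congr rfl
  intro w _
  by_cases h1 : w 1 = i <;> by_cases h2 : w 0 = m ∧ w (Fin.last (k+1)) = j ∧ NB w <;>
    simp [h1, h2]

lemma pMat_one (A : Matrix (Fin n) (Fin n) ℝ) (i j : Fin n) : pMat A 1 i j = A i j := by
  rw [pMat_succ_apply]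
  have h := ((piFinTwoEquiv fun _ : Fin 2 => Fin n).symm.sum_comp
    (fun v : Fin 2 → Fin n => if v 0 = i ∧ v (Fin.last 1) = j ∧ NB v then wt A v else 0))
  rw [← h]
  have : ∀ p : Fin n × Fin n,
      (if ((piFinTwoEquiv fun _ : Fin 2 => Fin n).symm p) 0 = i ∧
          ((piFinTwoEquiv fun _ : Fin 2 => Fin n).symm p) (Fin.last 1) = j ∧
          NB ((piFinTwoEquiv fun _ : Fin 2 => Fin n).symm p) then
        wt A ((piFinTwoEquiv fun _ : Fin 2 => Fin n).symm p) else 0)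
      = if p.1 = i ∧ p.2 = j then A p.1 p.2 else 0 := by
    intro p
    have hNB : NB ((piFinTwoEquiv fun _ : Fin 2 => Fin n).symm p) := fun t => t.elim0
    have hw : wt A ((piFinTwoEquiv fun _ : Fin 2 => Fin n).symm p) = A p.1 p.2 := by
      unfold wt
      rw [Fin.prod_univ_one]
      rfl
    rw [hw]
    refine if_congr (and_congr_right fun _ => ?_) rfl rfl
    have hlast : ((piFinTwoEquiv fun _ : Fin 2 => Fin n).symm p) (Fin.last 1) = p.2 := rfl
    rw [hlast]
    constructor
    · exact fun hh => hh.1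
    · exact fun hh => ⟨hh, fun t => t.elim0⟩
  rw [Finset.sum_congr rfl fun p _ => this p, Fintype.sum_prod_type]
  simp [ite_and, Finset.sum_ite_eq']

lemma cons_one {k : ℕ} (a : Fin n) (w : Fin (k+2) → Fin n) :
    (Fin.cons a w : Fin (k+3) → Fin n) 1 = w 0 := by
  rw [← Fin.succ_zero_eq_one, Fin.cons_succ]

lemma cons_wt (A : Matrix (Fin n) (Fin n) ℝ) {k : ℕ} (a : Fin n) (w : Fin (k+2) → Fin n) :
    wt A (Fin.cons a w) = A a (w 0) * wt A w := by
  unfold wt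
  rw [Fin.prod_univ_succ]
  congr 1

lemma cons_NB {k : ℕ} (a : Fin n) (w : Fin (k+2) → Fin n) :
    NB (Fin.cons a w : Fin (k+3) → Fin n) ↔ a ≠ w 1 ∧ NB w := by
  unfold NB
  rw [Fin.forall_fin_succ]
  have h0eq : (Fin.cons a w : Fin (k+3) → Fin n) ((0:Fin (k+1)).castSucc.castSucc) = a := by
    rw [Fin.castSucc_zero, Fin.castSucc_zero, Fin.cons_zero]
  have h1eq : (Fin.cons a w : Fin (k+3) → Fin n) ((0:Fin (k+1)).succ.succ) = w 1 := by
    rw [Fin.succ_zero_eq_one]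
    exact Fin.cons_succ (α := fun _ : Fin (k+3) => Fin n) a w (1 : Fin (k+2))
  have hc : ∀ t : Fin k, (Fin.cons a w : Fin (k+3) → Fin n) (t.succ.castSucc.castSucc) =
      w (t.castSucc.castSucc) := by
    intro t
    rw [← Fin.succ_castSucc, ← Fin.succ_castSucc, Fin.cons_succ]
  have hd : ∀ t : Fin k, (Fin.cons a w : Fin (k+3) → Fin n) (t.succ.succ.succ) =
      w (t.succ.succ) := fun t => by rw [Fin.cons_succ]
  rw [h0eq, h1eq]
  exact and_congr_right fun _ => forall_congr' fun t => by rw [hc t, hd t]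

lemma cons_last {k : ℕ} (a : Fin n) (w : Fin (k+2) → Fin n) :
    (Fin.cons a w : Fin (k+3) → Fin n) (Fin.last (k+2)) = w (Fin.last (k+1)) := by
  rw [← Fin.succ_last, Fin.cons_succ]

lemma sum_cons (k : ℕ) (f : (Fin (k+3) → Fin n) → ℝ) :
    ∑ v : Fin (k+3) → Fin n, f v = ∑ a : Fin n, ∑ w : Fin (k+2) → Fin n, f (Fin.cons a w) := by
  have h := (Fin.consEquiv (fun _ : Fin (k+3) => Fin n)).sum_comp f
  rw [← h, Fintype.sum_prod_type]
  rfl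

lemma T_one (A : Matrix (Fin n) (Fin n) ℝ) (m i j : Fin n) :
    T A 1 m i j = A m i * pMat A 0 i j := by
  rw [T_succ, pMat_zero, Matrix.one_apply]
  have h := ((piFinTwoEquiv fun _ : Fin 2 => Fin n).symm.sum_comp
    (fun v : Fin 2 → Fin n =>
      if v 0 = m ∧ v 1 = i ∧ v (Fin.last 1) = j ∧ NB v then wt A v else 0))
  rw [← h]
  have key : ∀ p : Fin n × Fin n,
      (if ((piFinTwoEquiv fun _ : Fin 2 => Fin n).symm p) 0 = m ∧
          ((piFinTwoEquiv fun _ : Fin 2 => Fin n).symm p) 1 = i ∧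
          ((piFinTwoEquiv fun _ : Fin 2 => Fin n).symm p) (Fin.last 1) = j ∧
          NB ((piFinTwoEquiv fun _ : Fin 2 => Fin n).symm p) then
        wt A ((piFinTwoEquiv fun _ : Fin 2 => Fin n).symm p) else 0)
      = if p.1 = m ∧ p.2 = i ∧ p.2 = j then A p.1 p.2 else 0 := by
    intro p
    have hw : wt A ((piFinTwoEquiv fun _ : Fin 2 => Fin n).symm p) = A p.1 p.2 := by
      unfold wt
      rw [Fin.prod_univ_one]
      rfl
    rw [hw]
    refine if_congr ?_ rfl rfl
    have h1 : ((piFinTwoEquiv fun _ : Fin 2 => Fin n).symm p) 1 = p.2 := rfl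
    have hl : ((piFinTwoEquiv fun _ : Fin 2 => Fin n).symm p) (Fin.last 1) = p.2 := rfl
    rw [h1, hl]
    constructor
    · exact fun hh => ⟨hh.1, hh.2.1, hh.2.2.1⟩
    · exact fun hh => ⟨hh.1, hh.2.1, hh.2.2, fun t => t.elim0⟩
  rw [Finset.sum_congr rfl fun p _ => key p, Fintype.sum_prod_type]
  simp only [ite_and, Finset.sum_ite_eq', Finset.sum_ite_irrel, Finset.sum_const_zero]
  by_cases hij : i = j <;> simp [hij]

lemma stepP (A : Matrix (Fin n) (Fin n) ℝ) (k : ℕ) (i j : Fin n) :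
    pMat A (k+1) i j = ∑ m, A i m * (pMat A k m j - T A k m i j) := by
  cases k with
  | zero =>
    rw [pMat_one]
    simp [pMat_zero, T_zero, Matrix.one_apply, mul_ite, Finset.sum_ite_eq']
  | succ k =>
    rw [pMat_succ_apply A (k+1) i j,
      sum_cons k (fun v => if v 0 = i ∧ v (Fin.last (k+2)) = j ∧ NB v then wt A v else 0)]
    have lhs_eq : ∀ a : Fin n, ∀ w : Fin (k+2) → Fin n,
        (if (Fin.cons a w : Fin (k+3) → Fin n) 0 = i ∧
            (Fin.cons a w : Fin (k+3) → Fin n) (Fin.last (k+2)) = j ∧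
            NB (Fin.cons a w : Fin (k+3) → Fin n) then
          wt A (Fin.cons a w : Fin (k+3) → Fin n) else 0)
        = if a = i then (if w (Fin.last (k+1)) = j ∧ NB w ∧ w 1 ≠ i then
            A i (w 0) * wt A w else 0) else 0 := by
      intro a w
      rw [cons_wt]
      have hC : ((Fin.cons a w : Fin (k+3) → Fin n) 0 = i ∧
          (Fin.cons a w : Fin (k+3) → Fin n) (Fin.last (k+2)) = j ∧
          NB (Fin.cons a w : Fin (k+3) → Fin n)) ↔
          (a = i ∧ (w (Fin.last (k+1)) = j ∧ (a ≠ w 1 ∧ NB w))) := by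
        rw [Fin.cons_zero, cons_last, cons_NB]
      rw [if_congr hC rfl rfl]
      by_cases ha : a = i
      · subst ha
        rw [if_pos rfl]
        have hiff : (a = a ∧ (w (Fin.last (k+1)) = j ∧ (a ≠ w 1 ∧ NB w))) ↔
            (w (Fin.last (k+1)) = j ∧ NB w ∧ w 1 ≠ a) := by
          constructor
          · rintro ⟨-, h1, h2, h3⟩
            exact ⟨h1, h3, Ne.symm h2⟩
          · rintro ⟨h1, h2, h3⟩
            exact ⟨rfl, h1, Ne.symm h3, h2⟩
        rw [if_congr hiff rfl rfl]
      · simp [ha]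
    rw [Finset.sum_congr rfl fun a _ => Finset.sum_congr rfl fun w _ => lhs_eq a w]
    rw [Finset.sum_congr rfl fun a _ =>
      Finset.sum_ite_irrel (a = i) Finset.univ _ (fun _ => (0:ℝ))]
    simp only [Finset.sum_const_zero]
    rw [Finset.sum_ite_eq' Finset.univ i
      (fun a => ∑ w : Fin (k+2) → Fin n,
        if w (Fin.last (k+1)) = j ∧ NB w ∧ w 1 ≠ i then A i (w 0) * wt A w else 0)]
    simp only [Finset.mem_univ, if_pos, Finset.sum_const_zero]
    -- RHS
    have rhs_eq : ∀ m : Fin n, A i m * (pMat A (k+1) m j - T A (k+1) m i j)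
        = ∑ w : Fin (k+2) → Fin n,
            if w 0 = m ∧ w (Fin.last (k+1)) = j ∧ NB w ∧ w 1 ≠ i
            then A i m * wt A w else 0 := by
      intro m
      rw [PT, Finset.mul_sum]
      exact Finset.sum_congr rfl fun w _ => by rw [mul_ite, mul_zero]
    rw [Finset.sum_congr rfl fun m _ => rhs_eq m, Finset.sum_comm]
    apply Finset.sum_congr rfl
    intro w _
    simp only [ite_and]
    rw [Finset.sum_ite_eq Finset.univ (w 0)
      (fun m => if w (Fin.last (k+1)) = j then if NB w then if w 1 ≠ i then A i m * wt A w
        else 0 else 0 else 0)]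
    simp only [Finset.mem_univ, if_pos]

lemma stepT (A : Matrix (Fin n) (Fin n) ℝ) (k : ℕ) (m i j : Fin n) :
    T A (k+1) m i j = A m i * (pMat A k i j - T A k i m j) := by
  cases k with
  | zero =>
    rw [T_one, T_zero, sub_zero]
  | succ k =>
    rw [T_succ A (k+1) m i j,
      sum_cons k (fun v => if v 0 = m ∧ v 1 = i ∧ v (Fin.last (k+2)) = j ∧ NB v
        then wt A v else 0)]
    have lhs_eq : ∀ a : Fin n, ∀ w : Fin (k+2) → Fin n,
        (if (Fin.cons a w : Fin (k+3) → Fin n) 0 = m ∧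
            (Fin.cons a w : Fin (k+3) → Fin n) 1 = i ∧
            (Fin.cons a w : Fin (k+3) → Fin n) (Fin.last (k+2)) = j ∧
            NB (Fin.cons a w : Fin (k+3) → Fin n) then
          wt A (Fin.cons a w : Fin (k+3) → Fin n) else 0)
        = if a = m then (if w 0 = i ∧ w (Fin.last (k+1)) = j ∧ NB w ∧ w 1 ≠ m then
            A m i * wt A w else 0) else 0 := by
      intro a w
      rw [cons_wt]
      have hC : ((Fin.cons a w : Fin (k+3) → Fin n) 0 = m ∧
          (Fin.cons a w : Fin (k+3) → Fin n) 1 = i ∧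
          (Fin.cons a w : Fin (k+3) → Fin n) (Fin.last (k+2)) = j ∧
          NB (Fin.cons a w : Fin (k+3) → Fin n)) ↔
          (a = m ∧ (w 0 = i ∧ (w (Fin.last (k+1)) = j ∧ (a ≠ w 1 ∧ NB w)))) := by
        rw [Fin.cons_zero, cons_one, cons_last, cons_NB]
      rw [if_congr hC rfl rfl]
      by_cases ha : a = m
      · subst ha
        rw [if_pos rfl]
        by_cases h0 : w 0 = i
        · have hiff : (a = a ∧ (w 0 = i ∧ (w (Fin.last (k+1)) = j ∧ (a ≠ w 1 ∧ NB w)))) ↔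
              (w 0 = i ∧ w (Fin.last (k+1)) = j ∧ NB w ∧ w 1 ≠ a) := by
            constructor
            · rintro ⟨-, h1, h2, h3, h4⟩
              exact ⟨h1, h2, h4, Ne.symm h3⟩
            · rintro ⟨h1, h2, h3, h4⟩
              exact ⟨rfl, h1, h2, Ne.symm h4, h3⟩
          rw [if_congr hiff (by rw [h0]) rfl]
        · simp [h0]
      · simp [ha]
    rw [Finset.sum_congr rfl fun a _ => Finset.sum_congr rfl fun w _ => lhs_eq a w]
    rw [Finset.sum_congr rfl fun a _ =>
      Finset.sum_ite_irrel (a = m) Finset.univ _ (fun _ => (0:ℝ))]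
    simp only [Finset.sum_const_zero]
    rw [Finset.sum_ite_eq' Finset.univ m
      (fun a => ∑ w : Fin (k+2) → Fin n,
        if w 0 = i ∧ w (Fin.last (k+1)) = j ∧ NB w ∧ w 1 ≠ m then A m i * wt A w else 0)]
    simp only [Finset.mem_univ, if_pos, Finset.sum_const_zero]
    rw [PT A k i m j, Finset.mul_sum]
    exact Finset.sum_congr rfl fun w _ => by rw [mul_ite, mul_zero]

noncomputable def dd (A : Matrix (Fin n) (Fin n) ℝ) (h : ℕ) (i : Fin n) : ℝ :=
  ∑ m, A i m ^ h * A m i ^ h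

lemma Vlem (A : Matrix (Fin n) (Fin n) ℝ) :
    ∀ k : ℕ, ∀ h : ℕ, ∀ i j : Fin n,
      ∑ m, A i m ^ (h+1) * A m i ^ h * T A k m i j
      = (∑ g ∈ Finset.range ((k+1)/2), dd A (h+g+1) i * pMat A (k-1-2*g) i j)
      - ∑ g ∈ Finset.range (k/2),
          ∑ m, A i m ^ (h+g+2) * A m i ^ (h+g+1) * pMat A (k-2*(g+1)) m j := by
  intro k
  induction k using Nat.strong_induction_on with
  | _ k ih =>
    match k with
    | 0 => intro h i j; simp [T_zero]
    | 1 =>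
      intro h i j
      have hone : ∀ m : Fin n, A i m ^ (h+1) * A m i ^ h * T A 1 m i j
          = A i m ^ (h+1) * A m i ^ (h+1) * pMat A 0 i j := by
        intro m
        rw [T_one]
        ring
      rw [Finset.sum_congr rfl fun m _ => hone m]
      rw [show (1+1)/2 = 1 by norm_num, show (1:ℕ)/2 = 0 by norm_num,
        Finset.range_zero, Finset.sum_empty, sub_zero, Finset.sum_range_one]
      simp only [dd, Finset.sum_mul]
    | (k+2) =>
      intro h i j
      have hT : ∀ m : Fin n, A i m ^ (h+1) * A m i ^ h * T A (k+2) m i j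
          = A i m ^ (h+1) * A m i ^ (h+1) * pMat A (k+1) i j
            - (A i m ^ (h+1+1) * A m i ^ (h+1) * pMat A k m j
              - A i m ^ (h+1+1) * A m i ^ (h+1) * T A k m i j) := by
        intro m
        rw [stepT A (k+1), stepT A k]
        ring
      rw [Finset.sum_congr rfl fun m _ => hT m, Finset.sum_sub_distrib,
        Finset.sum_sub_distrib]
      have hdd : ∑ m, A i m ^ (h+1) * A m i ^ (h+1) * pMat A (k+1) i j
          = dd A (h+1) i * pMat A (k+1) i j := by
        rw [dd, Finset.sum_mul]
      rw [hdd]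
      have hV := ih k (by omega) (h+1) i j
      rw [hV]
      -- now rewrite target sums
      have hs1 : (k+2+1)/2 = (k+1)/2 + 1 := by omega
      have hs2 : (k+2)/2 = k/2 + 1 := by omega
      rw [hs1, hs2, Finset.sum_range_succ', Finset.sum_range_succ']
      have e1 : ∀ g ∈ Finset.range ((k+1)/2),
          dd A (h+(g+1)+1) i * pMat A ((k+2)-1-2*(g+1)) i j
          = dd A ((h+1)+g+1) i * pMat A (k-1-2*g) i j := by
        intro g hg
        have h1 : h+(g+1)+1 = (h+1)+g+1 := by omega
        have h2 : (k+2)-1-2*(g+1) = k-1-2*g := by omega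
        rw [h1, h2]
      have e2 : ∀ g ∈ Finset.range (k/2),
          (∑ m, A i m ^ (h+(g+1)+2) * A m i ^ (h+(g+1)+1) * pMat A ((k+2)-2*((g+1)+1)) m j)
          = ∑ m, A i m ^ ((h+1)+g+2) * A m i ^ ((h+1)+g+1) * pMat A (k-2*(g+1)) m j := by
        intro g hg
        have h1 : h+(g+1)+2 = (h+1)+g+2 := by omega
        have h2 : h+(g+1)+1 = (h+1)+g+1 := by omega
        have h3 : (k+2)-2*((g+1)+1) = k-2*(g+1) := by omega
        rw [h1, h2, h3]
      rw [Finset.sum_congr rfl e1, Finset.sum_congr rfl e2]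
      have h0a : (k+2)-1-2*0 = k+1 := by omega
      have h0b : (k+2)-2*(0+1) = k := by omega
      rw [h0a, h0b]
      have h0c : h+0+1 = h+1 := by omega
      have h0d : ∀ m : Fin n, A i m ^ (h+0+2) * A m i ^ (h+0+1) * pMat A k m j
          = A i m ^ (h+1+1) * A m i ^ (h+1) * pMat A k m j := by
        intro m
        have g1 : h+0+2 = h+1+1 := by omega
        have g2 : h+0+1 = h+1 := by omega
        rw [g1, g2]
      rw [h0c, Finset.sum_congr rfl fun m _ => h0d m]
      ring


/-- the nonbacktracking walk matrices of a weighted loopless graph satisfy,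
for all `k ≥ 1`, the growing recurrence
`p_k(A) = ∑_{ℓ=2h+1 odd, 1≤ℓ≤k} (A^{∘(h+1)} ∘ (Aᵀ)^{∘h}) p_{k-ℓ}(A)
        - ∑_{ℓ=2h even, 2≤ℓ≤k} dd((A^{∘h})²) p_{k-ℓ}(A)`. -/
theorem stmt7 {n : ℕ} (A : Matrix (Fin n) (Fin n) ℝ)
    (hA : ∀ i j, 0 ≤ A i j) (hdiag : ∀ i, A i i = 0) :
    ∀ k : ℕ, 1 ≤ k →
      pMat A k =
        (∑ h ∈ (Finset.range (k + 1)).filter (fun h => 2 * h + 1 ≤ k),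
          (Matrix.of fun i j => A i j ^ (h + 1) * A j i ^ h) * pMat A (k - (2 * h + 1))) -
        (∑ h ∈ (Finset.range (k + 1)).filter (fun h => 1 ≤ h ∧ 2 * h ≤ k),
          Matrix.diagonal (fun i =>
            ((Matrix.of fun a b => A a b ^ h) * (Matrix.of fun a b => A a b ^ h)) i i) *
            pMat A (k - 2 * h)) := by
  intro k hk
  obtain ⟨k', rfl⟩ : ∃ k', k = k' + 1 := ⟨k - 1, by omega⟩
  have hfo : (Finset.range (k' + 1 + 1)).filter (fun h => 2 * h + 1 ≤ k' + 1)
      = Finset.range ((k' + 2) / 2) := by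
    ext g
    simp only [Finset.mem_filter, Finset.mem_range]
    omega
  have hfe : (Finset.range (k' + 1 + 1)).filter (fun h => 1 ≤ h ∧ 2 * h ≤ k' + 1)
      = Finset.image (fun g => g + 1) (Finset.range ((k' + 1) / 2)) := by
    ext g
    simp only [Finset.mem_filter, Finset.mem_range, Finset.mem_image]
    constructor
    · rintro ⟨h1, h2, h3⟩
      exact ⟨g - 1, by omega, by omega⟩
    · rintro ⟨a, ha, rfl⟩
      omega
  rw [hfo, hfe, Finset.sum_image (by intro x _ y _ hxy; simp only at hxy; omega)]
  ext i j
  rw [Matrix.sub_apply, Matrix.sum_apply, Matrix.sum_apply]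
  have hodd : ∀ h : ℕ,
      ((Matrix.of fun i j => A i j ^ (h + 1) * A j i ^ h) * pMat A (k' + 1 - (2 * h + 1))) i j
      = ∑ m, A i m ^ (h + 1) * A m i ^ h * pMat A (k' + 1 - (2 * h + 1)) m j := by
    intro h
    rw [Matrix.mul_apply]
    rfl
  have heven : ∀ g : ℕ,
      (Matrix.diagonal (fun i =>
        ((Matrix.of fun a b => A a b ^ (g+1)) * (Matrix.of fun a b => A a b ^ (g+1))) i i) *
          pMat A (k' + 1 - 2 * (g + 1))) i j
      = dd A (g + 1) i * pMat A (k' + 1 - 2 * (g + 1)) i j := by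
    intro g
    rw [Matrix.diagonal_mul, Matrix.mul_apply, dd]
    rfl
  rw [Finset.sum_congr rfl fun h _ => hodd h, Finset.sum_congr rfl fun g _ => heven g]
  -- LHS decomposition
  have hsplit : pMat A (k' + 1) i j
      = (∑ m, A i m * pMat A k' m j) - ∑ m, A i m ^ (0 + 1) * A m i ^ 0 * T A k' m i j := by
    rw [stepP A k' i j, ← Finset.sum_sub_distrib]
    apply Finset.sum_congr rfl
    intro m _
    ring
  rw [hsplit, Vlem A k' 0 i j]
  -- odd sum reshaping
  have hdiv1 : (k' + 2) / 2 = k' / 2 + 1 := by omega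
  rw [hdiv1, Finset.sum_range_succ']
  have e1 : ∀ g ∈ Finset.range (k' / 2),
      (∑ m, A i m ^ (g + 1 + 1) * A m i ^ (g + 1) * pMat A (k' + 1 - (2 * (g + 1) + 1)) m j)
      = ∑ m, A i m ^ (0 + g + 2) * A m i ^ (0 + g + 1) * pMat A (k' - 2 * (g + 1)) m j := by
    intro g _
    have a1 : g + 1 + 1 = 0 + g + 2 := by omega
    have a2 : g + 1 = 0 + g + 1 := by omega
    have a3 : k' + 1 - (2 * (g + 1) + 1) = k' - 2 * (g + 1) := by omega
    rw [a1, a3]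
    apply Finset.sum_congr rfl
    intro m _
    rw [show A m i ^ (g + 1) = A m i ^ (0 + g + 1) by rw [← a2]]
  have e0 : (∑ m, A i m ^ (0 + 1) * A m i ^ 0 * pMat A (k' + 1 - (2 * 0 + 1)) m j)
      = ∑ m, A i m * pMat A k' m j := by
    have a3 : k' + 1 - (2 * 0 + 1) = k' := by omega
    rw [a3]
    apply Finset.sum_congr rfl
    intro m _
    ring
  rw [Finset.sum_congr rfl e1, e0]
  -- even sum reshaping
  have e2 : ∀ g ∈ Finset.range ((k' + 1) / 2),
      dd A (g + 1) i * pMat A (k' + 1 - 2 * (g + 1)) i j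
      = dd A (0 + g + 1) i * pMat A (k' - 1 - 2 * g) i j := by
    intro g _
    have a1 : g + 1 = 0 + g + 1 := by omega
    have a2 : k' + 1 - 2 * (g + 1) = k' - 1 - 2 * g := by omega
    rw [a2, a1]
  rw [Finset.sum_congr rfl e2]
  ring
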